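/- For each p ≥ 2, let G_{2p} be the graph whose vertices are ordered pairs (i,j) with i,j ∈ {0,...,p+1} and i ≠ j, where (i,j) is adjacent to (k,ℓ) iff either (k = j and ℓ ∉ {i,j}) or (k ∉ {i,j} and ℓ = i). Then G_{2p} is a 2p-regular graph on (p+1)(p+2) vertices which is (p+2)-star colourable. -/

import Mathlib

/-- A star colouring: a proper colouring with no bicoloured 4-vertex path. -/
def IsStarColoring {V : Type*} {α : Type*} (G : SimpleGraph V) (f : V → α) : Prop :=
  (∀ ⦃u v : V⦄, G.Adj u v → f u ≠ f v) ∧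
  ∀ ⦃a b c d : V⦄, G.Adj a b → G.Adj b c → G.Adj c d →
    a ≠ c → a ≠ d → b ≠ d → ¬(f a = f c ∧ f b = f d)

/-- The vertex set of the graph G_{2p}: ordered pairs (i,j), i ≠ j. -/
def G2pVert (p : ℕ) := {x : Fin (p + 2) × Fin (p + 2) // x.1 ≠ x.2}

instance (p : ℕ) : Fintype (G2pVert p) :=
  inferInstanceAs (Fintype {x : Fin (p + 2) × Fin (p + 2) // x.1 ≠ x.2})

/-- The graph G_{2p}: (i,j) ~ (k,l) iff (k = j and l ∉ {i,j}) or
(k ∉ {i,j} and l = i). -/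
def G2p (p : ℕ) : SimpleGraph (G2pVert p) where
  Adj a b := (b.1.1 = a.1.2 ∧ b.1.2 ≠ a.1.1 ∧ b.1.2 ≠ a.1.2) ∨
             (b.1.1 ≠ a.1.1 ∧ b.1.1 ≠ a.1.2 ∧ b.1.2 = a.1.1)
  symm := by
    constructor
    rintro ⟨⟨i, j⟩, hij⟩ ⟨⟨k, l⟩, hkl⟩ (⟨h1, h2, h3⟩ | ⟨h1, h2, h3⟩)
    · subst h1
      exact Or.inr ⟨hij, Ne.symm h2, rfl⟩
    · subst h3
      exact Or.inl ⟨rfl, Ne.symm h2, Ne.symm hij⟩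
  loopless := by
    constructor
    rintro ⟨⟨i, j⟩, hij⟩ (⟨h1, _, _⟩ | ⟨h1, _, _⟩)
    · exact hij h1
    · exact h1 rfl

/-- G_{2p} is a 2p-regular graph on (p+1)(p+2) vertices which is
(p+2)-star colourable. -/
lemma filter_ne_pair_card {n : ℕ} (i j : Fin n) (hij : i ≠ j) :
    (Finset.univ.filter fun x : Fin n => x ≠ i ∧ x ≠ j).card = n - 2 := by
  have h : (Finset.univ.filter fun x : Fin n => x ≠ i ∧ x ≠ j)
      = Finset.univ \ {i, j} := by
    ext x; simp [and_comm]
  rw [h, Finset.card_sdiff_of_subset (Finset.subset_univ _)]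
  simp [Finset.card_insert_of_notMem, hij]

theorem stmt14 (p : ℕ) (hp : 2 ≤ p) :
    Fintype.card (G2pVert p) = (p + 1) * (p + 2) ∧
    (∀ v : G2pVert p, ((G2p p).neighborSet v).ncard = 2 * p) ∧
    ∃ f : G2pVert p → Fin (p + 2), IsStarColoring (G2p p) f := by
  refine ⟨?_, ?_, ⟨fun v => v.1.1, ?_, ?_⟩⟩
  · -- cardinality
    have h1 : Fintype.card {x : Fin (p+2) × Fin (p+2) // x.1 = x.2} = p + 2 := by
      have e : {x : Fin (p+2) × Fin (p+2) // x.1 = x.2} ≃ Fin (p+2) :=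
        { toFun := fun x => x.1.1
          invFun := fun i => ⟨(i, i), rfl⟩
          left_inv := by rintro ⟨⟨a, b⟩, h⟩; cases h; rfl
          right_inv := fun i => rfl }
      rw [Fintype.card_congr e, Fintype.card_fin]
    have h2 : Fintype.card (G2pVert p)
        = Fintype.card {x : Fin (p+2) × Fin (p+2) // ¬ x.1 = x.2} := rfl
    rw [h2, Fintype.card_subtype_compl, h1]
    simp [Fintype.card_prod]
    ring_nf
    omega
  · -- regularity
    rintro ⟨⟨i, j⟩, hij⟩
    classical
    set s1 : Finset (G2pVert p) :=
      Finset.univ.filter (fun b : G2pVert p => b.1.1 = j ∧ b.1.2 ≠ i ∧ b.1.2 ≠ j) with hs1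
    set s2 : Finset (G2pVert p) :=
      Finset.univ.filter (fun b : G2pVert p => b.1.1 ≠ i ∧ b.1.1 ≠ j ∧ b.1.2 = i) with hs2
    have hset : (G2p p).neighborSet ⟨(i, j), hij⟩ = ↑(s1 ∪ s2) := by
      ext b
      simp only [SimpleGraph.mem_neighborSet, Finset.coe_union, Set.mem_union,
        Finset.coe_filter, Set.mem_setOf_eq, Finset.mem_univ, true_and, hs1, hs2]
      rfl
    rw [hset, Set.ncard_coe_finset]
    have hdisj : Disjoint s1 s2 := by
      rw [Finset.disjoint_left]
      rintro b hb1 hb2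
      rw [hs1, Finset.mem_filter] at hb1
      rw [hs2, Finset.mem_filter] at hb2
      exact hb2.2.2.1 hb1.2.1
    rw [Finset.card_union_of_disjoint hdisj]
    have hcf := filter_ne_pair_card i j hij
    have hc1 : s1.card = (Finset.univ.filter fun x : Fin (p+2) => x ≠ i ∧ x ≠ j).card := by
      refine Finset.card_bij' (fun b _ => b.1.2)
        (fun l hl => ⟨(j, l), ?_⟩) ?_ ?_ ?_ ?_
      · simp only [Finset.mem_filter] at hl
        exact (hl.2.2).symm
      · intro b hb
        rw [hs1, Finset.mem_filter] at hb
        simp [hb.2.2.1, hb.2.2.2]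
      · intro l hl
        simp only [Finset.mem_filter] at hl
        rw [hs1]; refine Finset.mem_filter.mpr ?_
        exact ⟨Finset.mem_univ _, rfl, hl.2.1, hl.2.2⟩
      · intro b hb
        rw [hs1, Finset.mem_filter] at hb
        apply Subtype.ext
        exact Prod.ext hb.2.1.symm rfl
      · intro l hl; rfl
    have hc2 : s2.card = (Finset.univ.filter fun x : Fin (p+2) => x ≠ i ∧ x ≠ j).card := by
      refine Finset.card_bij' (fun b _ => b.1.1)
        (fun k hk => ⟨(k, i), ?_⟩) ?_ ?_ ?_ ?_
      · simp only [Finset.mem_filter] at hk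
        exact hk.2.1
      · intro b hb
        rw [hs2, Finset.mem_filter] at hb
        simp [hb.2.1, hb.2.2.1]
      · intro k hk
        simp only [Finset.mem_filter] at hk
        rw [hs2]; refine Finset.mem_filter.mpr ?_
        exact ⟨Finset.mem_univ _, hk.2.1, hk.2.2, rfl⟩
      · intro b hb
        rw [hs2, Finset.mem_filter] at hb
        apply Subtype.ext
        exact Prod.ext rfl hb.2.2.2.symm
      · intro k hk; rfl
    omega
  · -- proper
    rintro ⟨⟨i, j⟩, hij⟩ ⟨⟨k, l⟩, hkl⟩ (⟨h1, h2, h3⟩ | ⟨h1, h2, h3⟩)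
    · simp only at *
      subst h1
      exact fun h => hij h
    · simp only at *
      exact fun h => h1 h.symm
  · -- star
    rintro ⟨⟨i, j⟩, hij⟩ ⟨⟨b1, b2⟩, hb⟩ ⟨⟨c1, c2⟩, hc⟩ ⟨⟨d1, d2⟩, hd⟩
      hab hbc hcd hac had hbd ⟨h1, h2⟩
    simp only at h1 h2
    subst h1 h2
    -- now a = (i,j), c = (i, c2), b = (b1, b2), d = (b1, d2)
    rcases hab with ⟨e1, e2, e3⟩ | ⟨e1, e2, e3⟩ <;>
      rcases hbc with ⟨g1, g2, g3⟩ | ⟨g1, g2, g3⟩ <;>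
      simp only at *
    · -- b = (j, b2), c1 = b2 ; but c1 = i, b2 ≠ i
      exact e2 (g1.symm)
    · -- b = (j, b2), c = (i, j)?? c2 = b1 = j → c = a
      subst e1
      exact hac (Subtype.ext (Prod.ext rfl g3.symm))
    · -- b = (b1, i), c1 = b2 = i ok; c2 ≠ b1, c2 ≠ i
      rcases hcd with ⟨f1, f2, f3⟩ | ⟨f1, f2, f3⟩ <;> simp only at *
      · -- d1 = c2, but d1 = b1, c2 ≠ b1
        exact g2 f1.symm
      · -- d2 = c1 = i, so d = (b1, i) = b
        subst e3
        exact hbd (Subtype.ext (Prod.ext rfl f3.symm))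
    · -- b = (b1, i), second case bc: c1 ≠ b1, c1 ≠ b2 = i, but c1 = i
      exact g2 e3.symm
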